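/- Projections with same-space weights are orthogonal projections (Lemma 3.4, abstract form): let H be a real inner product space, N ∈ ℕ, let (b_i)_{i<N} be a linearly independent family in H, let S := span{b_0,…,b_{N−1}}, and let (ρ_i)_{i<N} be a family with ρ_i ∈ S for every i < N. Define P : H → H by P v := Σ_{i<N} ⟨v, ρ_i⟩ b_i and assume P s = s for all s ∈ S. Then for every v ∈ H the element P v is the orthogonal projection of v onto S; equivalently, ⟨v − P v, s⟩ = 0 for all s ∈ S. -/
import Mathlib


open scoped RealInnerProductSpace

/-- **Projections with same-space weights are orthogonal projections** (Lemma 3.4,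
abstract form): let `(b_i)_{i<N}` be linearly independent in a real inner product space
`H`, let `S := span{b_0, …, b_{N−1}}`, let `ρ_i ∈ S`, and define
`P v := Σ_i ⟨v, ρ_i⟩ b_i`. If `P s = s` for all `s ∈ S`, then for every `v ∈ H` the
element `P v` is the orthogonal projection of `v` onto `S`: it lies in `S` and
`⟨v − P v, s⟩ = 0` for all `s ∈ S`. -/
theorem same_order_weights_orthogonal_projection {H : Type*} [NormedAddCommGroup H]
    [InnerProductSpace ℝ H] (N : ℕ) (b : Fin N → H)
    (hb : LinearIndependent ℝ b)
    (ρ : Fin N → H) (hρ : ∀ i : Fin N, ρ i ∈ Submodule.span ℝ (Set.range b))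
    (hP : ∀ s ∈ Submodule.span ℝ (Set.range b), ∑ i : Fin N, ⟪s, ρ i⟫ • b i = s) :
    ∀ v : H,
      (∑ i : Fin N, ⟪v, ρ i⟫ • b i) ∈ Submodule.span ℝ (Set.range b) ∧
      ∀ s ∈ Submodule.span ℝ (Set.range b),
        ⟪v - ∑ i : Fin N, ⟪v, ρ i⟫ • b i, s⟫ = 0 := by
  set S := Submodule.span ℝ (Set.range b) with hS
  have hbmem : ∀ i, b i ∈ S := fun i => Submodule.subset_span ⟨i, rfl⟩
  -- the "adjoint" map also fixes S
  have key : ∀ s ∈ S, (∑ i : Fin N, ⟪s, b i⟫ • ρ i) = s := by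
    intro s hs
    set w := ∑ i : Fin N, ⟪s, b i⟫ • ρ i with hw
    have hwS : w ∈ S := Submodule.sum_mem _ fun i _ => Submodule.smul_mem _ _ (hρ i)
    have horth : ∀ t ∈ S, ⟪w - s, t⟫ = 0 := by
      intro t ht
      have h1 : ⟪w, t⟫ = ⟪s, ∑ i : Fin N, ⟪t, ρ i⟫ • b i⟫ := by
        rw [hw, sum_inner, inner_sum]
        refine Finset.sum_congr rfl fun i _ => ?_
        rw [real_inner_smul_left, real_inner_smul_right, real_inner_comm (ρ i) t]
        ring
      rw [inner_sub_left, h1, hP t ht, sub_self]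
    have h0 : w - s = 0 :=
      inner_self_eq_zero.mp (horth (w - s) (Submodule.sub_mem _ hwS hs))
    exact sub_eq_zero.mp h0
  intro v
  refine ⟨Submodule.sum_mem _ fun i _ => Submodule.smul_mem _ _ (hbmem i), ?_⟩
  intro s hs
  have h2 : ⟪∑ i : Fin N, ⟪v, ρ i⟫ • b i, s⟫ = ⟪v, ∑ i : Fin N, ⟪s, b i⟫ • ρ i⟫ := by
    rw [sum_inner, inner_sum]
    refine Finset.sum_congr rfl fun i _ => ?_
    rw [real_inner_smul_left, real_inner_smul_right, real_inner_comm (b i) s]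
    ring
  rw [inner_sub_left, h2, key s hs, sub_self]
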